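/- Set K := σ_lb/σ_ub, let θ ∈ (0,1), κ > 0, η ∈ (0,1) with (1 − θ)(1 − η)K − η > 0, and define ᾱ := min{ 2(1 − θ)σ_lb / ((2κ + L σ_ub) σ_ub), 2((1 − θ)(1 − η)K − η)/(L σ_ub (1 − η)) }. Suppose ‖g − ∇φ(x)‖ ≤ max{ε_g, κ α ‖g‖} for some ε_g ≥ 0, that ‖∇φ(x)‖ > ε_g/η, and that 0 < α ≤ ᾱ. Let d := B⁻¹g, x⁺ := x − α d, and let f, f⁺ ∈ ℝ satisfy |f − φ(x)| + |f⁺ − φ(x⁺)| ≤ 2ε_f for some ε_f ≥ 0. Then the sufficient-decrease test holds: f⁺ ≤ f − α θ ⟨d, g⟩ + 2ε_f. -/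

import Mathlib

open scoped RealInnerProductSpace
open Matrix

theorem descent_aux {n : ℕ} (φ : EuclideanSpace ℝ (Fin n) → ℝ) (hφ : ContDiff ℝ 1 φ)
    (L : ℝ)
    (hlip : ∀ a b, ‖gradient φ a - gradient φ b‖ ≤ L * ‖a - b‖)
    (x v : EuclideanSpace ℝ (Fin n)) :
    φ (x + v) ≤ φ x + ⟪gradient φ x, v⟫ + L / 2 * ‖v‖ ^ 2 := by
  have hdiff : Differentiable ℝ φ := hφ.differentiable one_ne_zero
  set ψ : ℝ → ℝ := fun t => φ (x + t • v) - t * ⟪gradient φ x, v⟫ - L * t ^ 2 / 2 * ‖v‖ ^ 2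
    with hψ
  have hD : ∀ t : ℝ, HasDerivAt ψ
      (⟪gradient φ (x + t • v), v⟫ - ⟪gradient φ x, v⟫ - L * t * ‖v‖ ^ 2) t := by
    intro t
    have hline : HasDerivAt (fun t : ℝ => x + t • v) v t := by
      simpa using ((hasDerivAt_id t).smul_const v).const_add x
    have h1 : HasDerivAt (fun t : ℝ => φ (x + t • v)) ⟪gradient φ (x + t • v), v⟫ t := by
      have := ((hdiff (x + t • v)).hasGradientAt.hasFDerivAt).comp_hasDerivAt t hline
      simpa [InnerProductSpace.toDual_apply_apply, Function.comp_def] using this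
    have h2 : HasDerivAt (fun t : ℝ => t * ⟪gradient φ x, v⟫) ⟪gradient φ x, v⟫ t := by
      simpa using (hasDerivAt_id t).mul_const ⟪gradient φ x, v⟫
    have h3 : HasDerivAt (fun t : ℝ => L * t ^ 2 / 2 * ‖v‖ ^ 2) (L * t * ‖v‖ ^ 2) t := by
      have : HasDerivAt (fun t : ℝ => t ^ 2) (2 * t) t := by simpa using hasDerivAt_pow 2 t
      have := ((this.const_mul L).div_const 2).mul_const (‖v‖ ^ 2)
      exact this.congr_deriv (by ring)
    exact (h1.sub h2).sub h3
  have hanti : AntitoneOn ψ (Set.Icc 0 1) := by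
    apply antitoneOn_of_deriv_nonpos (convex_Icc 0 1)
    · exact fun t _ => ((hD t).continuousAt).continuousWithinAt
    · exact fun t _ => ((hD t).differentiableAt).differentiableWithinAt
    · intro t ht
      rw [interior_Icc] at ht
      rw [(hD t).deriv]
      have hsub : ⟪gradient φ (x + t • v), v⟫ - ⟪gradient φ x, v⟫
          = ⟪gradient φ (x + t • v) - gradient φ x, v⟫ := (inner_sub_left _ _ _).symm
      have hcs : ⟪gradient φ (x + t • v) - gradient φ x, v⟫
          ≤ ‖gradient φ (x + t • v) - gradient φ x‖ * ‖v‖ := real_inner_le_norm _ _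
      have hlip' : ‖gradient φ (x + t • v) - gradient φ x‖ ≤ L * (t * ‖v‖) := by
        have := hlip (x + t • v) x
        simpa [norm_smul, abs_of_nonneg ht.1.le] using this
      nlinarith [norm_nonneg v, mul_le_mul_of_nonneg_right hlip' (norm_nonneg v)]
  have := hanti (Set.left_mem_Icc.2 zero_le_one) (Set.right_mem_Icc.2 zero_le_one) zero_le_one
  simp only [hψ, zero_smul, add_zero, one_smul, zero_mul, zero_pow, mul_zero, sub_zero,
    one_pow, mul_one, zero_div] at this
  linarith

theorem spectral_aux {n : ℕ} (B : Matrix (Fin n) (Fin n) ℝ)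
    (hB : B.IsHermitian) (hPD : B.PosDef)
    (σlbB σubB : ℝ) (h0 : 0 < σlbB) (hord : σlbB ≤ σubB)
    (heig : ∀ i, σlbB ≤ hB.eigenvalues i ∧ hB.eigenvalues i ≤ σubB)
    (g : EuclideanSpace ℝ (Fin n)) :
    (1 / σubB) * ‖g‖ ^ 2 ≤ ⟪Matrix.toEuclideanLin B⁻¹ g, g⟫ ∧
      ‖Matrix.toEuclideanLin B⁻¹ g‖ ≤ (1 / σlbB) * ‖g‖ := by
  classical
  set eB := hB.eigenvectorBasis with heB
  set lam := hB.eigenvalues with hlam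
  have hlampos : ∀ i, 0 < lam i := fun i => hPD.eigenvalues_pos i
  have hub : 0 < σubB := h0.trans_le hord
  have hdet : IsUnit B.det := isUnit_iff_ne_zero.2 hPD.det_pos.ne'
  have hTe : ∀ i, Matrix.toEuclideanLin B⁻¹ (eB i) = (lam i)⁻¹ • eB i := by
    intro i
    have h1 : B⁻¹ *ᵥ (B *ᵥ ⇑(eB i)) = ⇑(eB i) := by
      rw [mulVec_mulVec, Matrix.nonsing_inv_mul B hdet, one_mulVec]
    rw [hB.mulVec_eigenvectorBasis, mulVec_smul] at h1
    have h2 : B⁻¹ *ᵥ ⇑(eB i) = (lam i)⁻¹ • ⇑(eB i) := by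
      rw [eq_comm, inv_smul_eq_iff₀ (hlampos i).ne']
      exact h1.symm
    rw [Matrix.toEuclideanLin_apply, h2, WithLp.toLp_smul, WithLp.toLp_ofLp]
  set c : Fin n → ℝ := fun i => eB.repr g i with hc
  have hgsum : ∑ i, c i • eB i = g := eB.sum_repr g
  have hTg : Matrix.toEuclideanLin B⁻¹ g = ∑ i, ((lam i)⁻¹ * c i) • eB i := by
    rw [← hgsum, map_sum]
    refine Finset.sum_congr rfl fun i _ => ?_
    rw [_root_.map_smul, hTe i, smul_smul, mul_comm]
  have horth := eB.orthonormal
  have hinner : ⟪Matrix.toEuclideanLin B⁻¹ g, g⟫ = ∑ i, ((lam i)⁻¹ * c i) * c i := by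
    rw [hTg, ← hgsum]
    simpa using horth.inner_sum (fun i => (lam i)⁻¹ * c i) c Finset.univ
  have hgnorm : ‖g‖ ^ 2 = ∑ i, c i * c i := by
    rw [← real_inner_self_eq_norm_sq, ← hgsum]
    simpa using horth.inner_sum c c Finset.univ
  have hTnorm : ‖Matrix.toEuclideanLin B⁻¹ g‖ ^ 2
      = ∑ i, ((lam i)⁻¹ * c i) * ((lam i)⁻¹ * c i) := by
    rw [← real_inner_self_eq_norm_sq, hTg]
    simpa using horth.inner_sum (fun i => (lam i)⁻¹ * c i) (fun i => (lam i)⁻¹ * c i) Finset.univ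
  constructor
  · rw [hinner, hgnorm, Finset.mul_sum]
    refine Finset.sum_le_sum fun i _ => ?_
    have h1 : 1 / σubB ≤ (lam i)⁻¹ := by
      rw [one_div]
      exact inv_anti₀ (hlampos i) (heig i).2
    nlinarith [sq_nonneg (c i), hlampos i]
  · have hsq : ‖Matrix.toEuclideanLin B⁻¹ g‖ ^ 2 ≤ ((1 / σlbB) * ‖g‖) ^ 2 := by
      rw [hTnorm, mul_pow, hgnorm, Finset.mul_sum]
      refine Finset.sum_le_sum fun i _ => ?_
      have h1 : (lam i)⁻¹ ≤ 1 / σlbB := by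
        rw [one_div]
        exact inv_anti₀ h0 (heig i).1
      have h2 : 0 < (lam i)⁻¹ := inv_pos.2 (hlampos i)
      nlinarith [sq_nonneg (c i), mul_le_mul h1 h1 h2.le (one_div_pos.2 h0).le]
    have hrhs : 0 ≤ (1 / σlbB) * ‖g‖ := by positivity
    exact le_of_pow_le_pow_left₀ two_ne_zero hrhs hsq

set_option maxHeartbeats 1000000 in
/-- Claim 4 of Proposition 4.4: a true iteration with step size at most `ᾱ`
satisfies the sufficient-decrease test `f⁺ ≤ f − α θ ⟨d, g⟩ + 2ε_f`. -/
theorem stmt5 {n : ℕ} (hn : 1 ≤ n)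
    (φ : EuclideanSpace ℝ (Fin n) → ℝ) (hφ : ContDiff ℝ 1 φ)
    (L : ℝ) (hL : 0 < L)
    (hlip : ∀ a b, ‖gradient φ a - gradient φ b‖ ≤ L * ‖a - b‖)
    (B : Matrix (Fin n) (Fin n) ℝ) (hB : B.IsHermitian) (hPD : B.PosDef)
    (σlbB σubB σlb σub K : ℝ) (h0 : 0 < σlbB) (hord : σlbB ≤ σubB)
    (heig : ∀ i, σlbB ≤ hB.eigenvalues i ∧ hB.eigenvalues i ≤ σubB)
    (hσlb : σlb = 1 / σubB) (hσub : σub = 1 / σlbB) (hK : K = σlb / σub)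
    (x g : EuclideanSpace ℝ (Fin n))
    (θ : ℝ) (hθ : θ ∈ Set.Ioo (0 : ℝ) 1)
    (κ : ℝ) (hκ : 0 < κ)
    (η : ℝ) (hη : η ∈ Set.Ioo (0 : ℝ) 1)
    (hpos : 0 < (1 - θ) * (1 - η) * K - η)
    (αbar : ℝ)
    (hαbar : αbar = min (2 * (1 - θ) * σlb / ((2 * κ + L * σub) * σub))
      (2 * ((1 - θ) * (1 - η) * K - η) / (L * σub * (1 - η))))
    (εg : ℝ) (hεg : 0 ≤ εg)
    (α : ℝ) (hα0 : 0 < α) (hαub : α ≤ αbar)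
    (hg : ‖g - gradient φ x‖ ≤ max εg (κ * α * ‖g‖))
    (hgrad : εg / η < ‖gradient φ x‖)
    (εf : ℝ) (hεf : 0 ≤ εf) (f fplus : ℝ)
    (hnoise : |f - φ x| + |fplus - φ (x - α • Matrix.toEuclideanLin B⁻¹ g)| ≤ 2 * εf) :
    fplus ≤ f - α * θ * ⟪Matrix.toEuclideanLin B⁻¹ g, g⟫ + 2 * εf := by
  obtain ⟨hθ0, hθ1⟩ := hθ
  obtain ⟨hη0, hη1⟩ := hη
  have hub : 0 < σubB := h0.trans_le hord
  have hσlb0 : 0 < σlb := hσlb ▸ one_div_pos.2 hub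
  have hσub0 : 0 < σub := hσub ▸ one_div_pos.2 h0
  set d : EuclideanSpace ℝ (Fin n) := Matrix.toEuclideanLin B⁻¹ g with hd
  set G := ‖g‖ with hG
  set D := ‖d‖ with hD
  set E := ‖g - gradient φ x‖ with hE
  set ip : ℝ := ⟪d, g⟫ with hip
  obtain ⟨hb1, hb2⟩ := spectral_aux B hB hPD σlbB σubB h0 hord heig g
  rw [← hσlb] at hb1
  rw [← hσub] at hb2
  have hD0 : (0:ℝ) ≤ D := norm_nonneg _
  have hG0 : (0:ℝ) ≤ G := norm_nonneg _
  have hE0 : (0:ℝ) ≤ E := norm_nonneg _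
  -- descent
  have hdesc := descent_aux φ hφ L hlip x (-(α • d))
  rw [← sub_eq_add_neg] at hdesc
  have h_inner_eq : ⟪gradient φ x, -(α • d)⟫ = -(α * ⟪gradient φ x, d⟫) := by
    rw [inner_neg_right, real_inner_smul_right]
  have h_norm_eq : ‖-(α • d)‖ ^ 2 = α ^ 2 * D ^ 2 := by
    rw [norm_neg, norm_smul, mul_pow, Real.norm_eq_abs, sq_abs]
  rw [h_inner_eq, h_norm_eq] at hdesc
  -- rewrite the gradient inner product
  have hgd : (⟪g, d⟫ : ℝ) = ip := (real_inner_comm g d).symm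
  have h_split : ⟪gradient φ x, d⟫ = ip - ⟪g - gradient φ x, d⟫ := by
    rw [inner_sub_left, hgd]; ring
  have hed : ⟪g - gradient φ x, d⟫ ≤ E * D := real_inner_le_norm _ _
  -- key inequality
  have hkey : E * D + L * α * D ^ 2 / 2 ≤ (1 - θ) * ip := by
    have hDsq : D ^ 2 ≤ σub ^ 2 * G ^ 2 := by
      have := pow_le_pow_left₀ hD0 hb2 2
      calc D ^ 2 ≤ (σub * G) ^ 2 := this
        _ = σub ^ 2 * G ^ 2 := by ring
    have hLD : L * α * D ^ 2 / 2 ≤ L * α * (σub ^ 2 * G ^ 2) / 2 := by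
      have := mul_le_mul_of_nonneg_left hDsq (by positivity : (0:ℝ) ≤ L * α)
      linarith
    rcases le_total εg (κ * α * G) with hcase | hcase
    · -- max is κ α G
      have hEb : E ≤ κ * α * G := le_trans hg (by rw [max_eq_right hcase])
      have hα1 : α ≤ 2 * (1 - θ) * σlb / ((2 * κ + L * σub) * σub) :=
        le_trans hαub (hαbar ▸ min_le_left _ _)
      have hden : 0 < (2 * κ + L * σub) * σub := by positivity
      have hα1' : α * ((2 * κ + L * σub) * σub) ≤ 2 * (1 - θ) * σlb :=
        (le_div_iff₀ hden).1 hα1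
      have hED : E * D ≤ (κ * α * G) * (σub * G) :=
        mul_le_mul hEb hb2 hD0 (by positivity)
      have hb1' : (1 - θ) * (σlb * G ^ 2) ≤ (1 - θ) * ip :=
        mul_le_mul_of_nonneg_left hb1 (by linarith)
      have hα1'' : α * ((2 * κ + L * σub) * σub) * (G ^ 2 / 2) ≤
          2 * (1 - θ) * σlb * (G ^ 2 / 2) :=
        mul_le_mul_of_nonneg_right hα1' (by positivity)
      have e1 : α * ((2 * κ + L * σub) * σub) * (G ^ 2 / 2)
          = (κ * α * G) * (σub * G) + L * α * (σub ^ 2 * G ^ 2) / 2 := by ring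
      have e2 : 2 * (1 - θ) * σlb * (G ^ 2 / 2) = (1 - θ) * (σlb * G ^ 2) := by ring
      linarith
    · -- max is εg
      have hEb : E ≤ εg := le_trans hg (by rw [max_eq_left hcase])
      have hα2 : α ≤ 2 * ((1 - θ) * (1 - η) * K - η) / (L * σub * (1 - η)) :=
        le_trans hαub (hαbar ▸ min_le_right _ _)
      have hden : 0 < L * σub * (1 - η) := by
        have : (0:ℝ) < 1 - η := by linarith
        positivity
      have hα2' : α * (L * σub * (1 - η)) ≤ 2 * ((1 - θ) * (1 - η) * K - η) :=
        (le_div_iff₀ hden).1 hα2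
      have hKσ : K * σub = σlb := by
        rw [hK]; field_simp
      have hgn : ‖gradient φ x‖ ≤ G + E := by
        have heq : gradient φ x = g - (g - gradient φ x) := by abel
        calc ‖gradient φ x‖ = ‖g - (g - gradient φ x)‖ := by rw [← heq]
          _ ≤ G + E := norm_sub_le _ _
      have heg2 : (1 - η) * εg ≤ η * G := by
        have h1 : εg / η < G + E := lt_of_lt_of_le hgrad hgn
        have h2 : εg < η * (G + E) := by
          rw [div_lt_iff₀ hη0, mul_comm] at h1
          exact h1
        have h3 := mul_le_mul_of_nonneg_left hEb hη0.le
        have e : η * (G + E) = η * G + η * E := by ring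
        linarith
      have hED : E * D ≤ εg * (σub * G) :=
        mul_le_mul hEb hb2 hD0 hεg
      have hb1' : (1 - θ) * (1 - η) * (σlb * G ^ 2) ≤ (1 - θ) * (1 - η) * ip :=
        mul_le_mul_of_nonneg_left hb1 (mul_nonneg (by linarith) (by linarith))
      have hED' : (1 - η) * (E * D) ≤ (1 - η) * (εg * (σub * G)) :=
        mul_le_mul_of_nonneg_left hED (by linarith)
      have hLD' : (1 - η) * (L * α * D ^ 2 / 2) ≤ (1 - η) * (L * α * (σub ^ 2 * G ^ 2) / 2) :=
        mul_le_mul_of_nonneg_left hLD (by linarith)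
      have heg2' : (1 - η) * εg * (σub * G) ≤ η * G * (σub * G) :=
        mul_le_mul_of_nonneg_right heg2 (by positivity)
      have hα2'' : α * (L * σub * (1 - η)) * (σub * G ^ 2 / 2) ≤
          2 * ((1 - θ) * (1 - η) * K - η) * (σub * G ^ 2 / 2) :=
        mul_le_mul_of_nonneg_right hα2' (by positivity)
      have e1 : 2 * ((1 - θ) * (1 - η) * K - η) * (σub * G ^ 2 / 2)
          = (1 - θ) * (1 - η) * ((K * σub) * G ^ 2) - η * G * (σub * G) := by ring
      rw [e1, hKσ] at hα2''
      have e2 : α * (L * σub * (1 - η)) * (σub * G ^ 2 / 2)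
          = (1 - η) * (L * α * (σub ^ 2 * G ^ 2) / 2) := by ring
      rw [e2] at hα2''
      have e3 : (1 - η) * εg * (σub * G) = (1 - η) * (εg * (σub * G)) := by ring
      rw [e3] at heg2'
      have hfinal : (1 - η) * (E * D + L * α * D ^ 2 / 2) ≤ (1 - η) * ((1 - θ) * ip) := by
        have e4 : (1 - η) * (E * D + L * α * D ^ 2 / 2)
            = (1 - η) * (E * D) + (1 - η) * (L * α * D ^ 2 / 2) := by ring
        have e5 : (1 - η) * ((1 - θ) * ip) = (1 - θ) * (1 - η) * ip := by ring
        linarith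
      have h1η : (0:ℝ) < 1 - η := by linarith
      exact (mul_le_mul_iff_right₀ h1η).1 hfinal
  -- combine descent and key inequality
  have hphi : φ (x - α • d) ≤ φ x - α * θ * ip := by
    have hA : α * ⟪gradient φ x, d⟫ = α * ip - α * ⟪g - gradient φ x, d⟫ := by
      rw [h_split]; ring
    have hB' : α * ⟪g - gradient φ x, d⟫ ≤ α * (E * D) :=
      mul_le_mul_of_nonneg_left hed hα0.le
    have hC : α * (E * D + L * α * D ^ 2 / 2) ≤ α * ((1 - θ) * ip) :=
      mul_le_mul_of_nonneg_left hkey hα0.le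
    linarith [hdesc, hA, hB', hC]
  have h1 : φ x - f ≤ |f - φ x| := by
    rw [abs_sub_comm]; exact le_abs_self _
  have h2 : fplus - φ (x - α • d) ≤ |fplus - φ (x - α • d)| := le_abs_self _
  linarith
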